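/- Fazel–Hindi–Boyd characterization of the trace norm: for a complex square matrix A and t ∈ ℝ, ‖A‖_tr ≤ t if and only if there exist Hermitian matrices Y and Z such that the block matrix [[Y, A],[A†, Z]] is positive semidefinite and tr Y + tr Z ≤ 2t. -/

import Mathlib

open Matrix BigOperators ComplexOrder

namespace FHB
variable {n : Type*} [Fintype n] [DecidableEq n]

lemma r_sp {x : ℝ} : Real.sqrt x * (Real.sqrt x * (Real.sqrt x)⁻¹) = Real.sqrt x := by
  rcases eq_or_ne (Real.sqrt x) 0 with h | h
  · simp [h]
  · rw [mul_inv_cancel₀ h, mul_one]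

lemma r_ps {x : ℝ} : (Real.sqrt x * (Real.sqrt x)⁻¹) * Real.sqrt x = Real.sqrt x := by
  rw [mul_comm]; exact r_sp

lemma r_sip {x : ℝ} : (Real.sqrt x)⁻¹ * (Real.sqrt x * (Real.sqrt x)⁻¹) = (Real.sqrt x)⁻¹ := by
  rcases eq_or_ne (Real.sqrt x) 0 with h | h
  · simp [h]
  · rw [mul_inv_cancel₀ h, mul_one]

lemma r_sis {x : ℝ} : (Real.sqrt x)⁻¹ * Real.sqrt x = Real.sqrt x * (Real.sqrt x)⁻¹ :=
  mul_comm _ _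

lemma r_sil {x : ℝ} (hx : 0 ≤ x) : (Real.sqrt x)⁻¹ * x = Real.sqrt x := by
  rcases eq_or_ne (Real.sqrt x) 0 with h | h
  · have : x = 0 := by
      have := Real.mul_self_sqrt hx
      rw [h, zero_mul] at this; exact this.symm
    simp [this]
  · have h2 : (Real.sqrt x)⁻¹ * x = (Real.sqrt x)⁻¹ * (Real.sqrt x * Real.sqrt x) := by
      rw [Real.mul_self_sqrt hx]
    rw [h2, ← mul_assoc, inv_mul_cancel₀ h, one_mul]

lemma r_lp {x : ℝ} (hx : 0 ≤ x) : x * (Real.sqrt x * (Real.sqrt x)⁻¹) = x := by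
  rcases eq_or_ne (Real.sqrt x) 0 with h | h
  · have hx0 : x = 0 := by
      have := Real.mul_self_sqrt hx
      rw [h, zero_mul] at this; exact this.symm
    simp [hx0]
  · rw [mul_inv_cancel₀ h, mul_one]

lemma r_pl {x : ℝ} (hx : 0 ≤ x) : (Real.sqrt x * (Real.sqrt x)⁻¹) * x = x := by
  rw [mul_comm]; exact r_lp hx

end FHB

namespace FHB
variable {n : Type*} [Fintype n] [DecidableEq n]

lemma Dm_mul (V : Matrix n n ℂ) (hV1 : Vᴴ * V = 1) (f g h : n → ℝ)
    (hfg : ∀ i, f i * g i = h i) :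
    (V * diagonal (fun i => (f i : ℂ)) * Vᴴ) * (V * diagonal (fun i => (g i : ℂ)) * Vᴴ)
      = V * diagonal (fun i => (h i : ℂ)) * Vᴴ := by
  simp only [Matrix.mul_assoc]
  rw [← Matrix.mul_assoc Vᴴ V, hV1, Matrix.one_mul,
    ← Matrix.mul_assoc (diagonal _) (diagonal _), diagonal_mul_diagonal]
  have e : (fun i => (f i : ℂ) * (g i : ℂ)) = fun i => (h i : ℂ) := by
    funext i
    rw [← Complex.ofReal_mul, hfg i]
  rw [e]

lemma Dm_ct (V : Matrix n n ℂ) (f : n → ℝ) :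
    (V * diagonal (fun i => (f i : ℂ)) * Vᴴ)ᴴ = V * diagonal (fun i => (f i : ℂ)) * Vᴴ := by
  have h : star (fun i => (f i : ℂ)) = fun i => (f i : ℂ) := by
    ext i; simp
  simp only [conjTranspose_mul, conjTranspose_conjTranspose, diagonal_conjTranspose, h,
    Matrix.mul_assoc]

lemma spec_eq {M : Matrix n n ℂ} (hH : M.IsHermitian) :
    M = (hH.eigenvectorUnitary : Matrix n n ℂ) * diagonal (fun i => ((hH.eigenvalues i : ℝ) : ℂ))
      * (hH.eigenvectorUnitary : Matrix n n ℂ)ᴴ := by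
  have := hH.spectral_theorem
  rw [Unitary.conjStarAlgAut_apply] at this
  exact this

noncomputable def psqrt {M : Matrix n n ℂ} (hM : M.PosSemidef) : Matrix n n ℂ :=
  (hM.1.eigenvectorUnitary : Matrix n n ℂ) *
    diagonal ((fun x : ℝ => (x : ℂ)) ∘ Real.sqrt ∘ hM.1.eigenvalues) *
    (star hM.1.eigenvectorUnitary : Matrix n n ℂ)

lemma psqrt_posSemidef {M : Matrix n n ℂ} (hM : M.PosSemidef) : (psqrt hM).PosSemidef := by
  have hd : (diagonal (fun i => ((Real.sqrt (hM.1.eigenvalues i) : ℝ) : ℂ))).PosSemidef :=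
    PosSemidef.diagonal (fun i => Complex.zero_le_real.mpr (Real.sqrt_nonneg _))
  exact hd.mul_mul_conjTranspose_same _

lemma psqrt_mul_self {M : Matrix n n ℂ} (hM : M.PosSemidef) : psqrt hM * psqrt hM = M := by
  have hV1 : (hM.1.eigenvectorUnitary : Matrix n n ℂ)ᴴ * (hM.1.eigenvectorUnitary : Matrix n n ℂ)
      = 1 := by
    simpa [star_eq_conjTranspose] using Unitary.coe_star_mul_self hM.1.eigenvectorUnitary
  rw [show psqrt hM = (hM.1.eigenvectorUnitary : Matrix n n ℂ) *
      diagonal (fun i => ((Real.sqrt (hM.1.eigenvalues i) : ℝ) : ℂ)) *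
      (hM.1.eigenvectorUnitary : Matrix n n ℂ)ᴴ from rfl,
    Dm_mul _ hV1 _ _ _ (fun i => Real.mul_self_sqrt (hM.eigenvalues_nonneg i))]
  exact (spec_eq hM.1).symm

/-- Existence of a "partial isometry" `W` with `W √(AᴴA) = A` etc. -/
lemma exists_W (A : Matrix n n ℂ) :
    ∃ W : Matrix n n ℂ,
      W * psqrt (posSemidef_conjTranspose_mul_self A) = A ∧
      Wᴴ * A = psqrt (posSemidef_conjTranspose_mul_self A) ∧
      Wᴴ * W * psqrt (posSemidef_conjTranspose_mul_self A)
        = psqrt (posSemidef_conjTranspose_mul_self A) ∧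
      W * (Wᴴ * W) = W := by
  have hB : (Aᴴ * A).PosSemidef := posSemidef_conjTranspose_mul_self A
  have hH := hB.1
  set V : Matrix n n ℂ := (hH.eigenvectorUnitary : Matrix n n ℂ) with hVdef
  set lam : n → ℝ := hH.eigenvalues with hlamdef
  have hlam : ∀ i, 0 ≤ lam i := hB.eigenvalues_nonneg
  have hV1 : Vᴴ * V = 1 := by
    simpa [star_eq_conjTranspose] using Unitary.coe_star_mul_self hH.eigenvectorUnitary
  have hB_eq : Aᴴ * A = V * diagonal (fun i => ((lam i : ℝ) : ℂ)) * Vᴴ := by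
    exact spec_eq hH
  -- the three diagonal-function matrices
  set R : Matrix n n ℂ := V * diagonal (fun i => ((Real.sqrt (lam i) : ℝ) : ℂ)) * Vᴴ with hRdef
  set Ri : Matrix n n ℂ := V * diagonal (fun i => (((Real.sqrt (lam i))⁻¹ : ℝ) : ℂ)) * Vᴴ
    with hRidef
  set P : Matrix n n ℂ :=
    V * diagonal (fun i => ((Real.sqrt (lam i) * (Real.sqrt (lam i))⁻¹ : ℝ) : ℂ)) * Vᴴ with hPdef
  have hsqrt_eq : psqrt (posSemidef_conjTranspose_mul_self A) = R := rfl
  have hRih : Riᴴ = Ri := Dm_ct V _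
  have hPh : Pᴴ = P := Dm_ct V _
  -- products
  have hRiR : Ri * R = P := Dm_mul V hV1 _ _ _ (fun i => r_sis)
  have hBP : (Aᴴ * A) * P = Aᴴ * A := by
    rw [hB_eq]; exact Dm_mul V hV1 _ _ _ (fun i => r_lp (hlam i))
  have hPB : P * (Aᴴ * A) = Aᴴ * A := by
    rw [hB_eq]; exact Dm_mul V hV1 _ _ _ (fun i => r_pl (hlam i))
  have hRiB : Ri * (Aᴴ * A) = R := by
    rw [hB_eq]; exact Dm_mul V hV1 _ _ _ (fun i => r_sil (hlam i))
  have hRiP : Ri * P = Ri := Dm_mul V hV1 _ _ _ (fun i => r_sip)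
  have hRRi : R * Ri = P := Dm_mul V hV1 _ _ _ (fun i => rfl)
  -- A * P = A
  have hAP : A * P = A := by
    have hz : (A - A * P)ᴴ * (A - A * P) = 0 := by
      rw [conjTranspose_sub, conjTranspose_mul, hPh, Matrix.sub_mul, Matrix.mul_sub,
        Matrix.mul_sub]
      have e1 : Aᴴ * (A * P) = Aᴴ * A := by rw [← Matrix.mul_assoc, hBP]
      have e2 : P * Aᴴ * A = Aᴴ * A := by rw [Matrix.mul_assoc, hPB]
      have e3 : P * Aᴴ * (A * P) = Aᴴ * A := by
        rw [Matrix.mul_assoc, e1, ← Matrix.mul_assoc, Matrix.mul_assoc, hPB]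
      rw [e1, e2, e3]
      abel
    have h2 : A - A * P = 0 := conjTranspose_mul_self_eq_zero.mp hz
    have := sub_eq_zero.mp h2
    exact this.symm
  refine ⟨A * Ri, ?_, ?_, ?_, ?_⟩
  · rw [hsqrt_eq, Matrix.mul_assoc, hRiR, hAP]
  · rw [hsqrt_eq, conjTranspose_mul, hRih, Matrix.mul_assoc, hRiB]
  all_goals {
    have hPR : P * R = R := Dm_mul V hV1 _ _ _ (fun i => r_ps)
    have hWW : (A * Ri)ᴴ * (A * Ri) = P := by
      rw [conjTranspose_mul, hRih, Matrix.mul_assoc, ← Matrix.mul_assoc Aᴴ A Ri,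
        ← Matrix.mul_assoc Ri (Aᴴ * A) Ri, hRiB, hRRi]
    first
    | rw [hsqrt_eq, hWW, hPR]
    | rw [hWW, Matrix.mul_assoc, hRiP] }
end FHB


namespace FHB
variable {n : Type*} [Fintype n] [DecidableEq n]

lemma trace_nn {m : Type*} [Fintype m] [DecidableEq m] {M : Matrix m m ℂ}
    (hM : M.PosSemidef) : 0 ≤ M.trace := by
  have h : ∀ i, 0 ≤ M i i := by
    intro i
    have := hM.dotProduct_mulVec_nonneg (Pi.single i 1)
    simpa [mulVec_single, dotProduct, Pi.single_apply, apply_ite] using this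
  exact Finset.sum_nonneg fun i _ => h i

lemma re_nn {z : ℂ} (h : 0 ≤ z) : 0 ≤ z.re := by
  rw [Complex.le_def] at h; simpa using h.1

lemma trace_fb {m : Type*} [Fintype m] (A B C D : Matrix m m ℂ) :
    (fromBlocks A B C D).trace = A.trace + D.trace := by
  simp [Matrix.trace, Fintype.sum_sum_type, fromBlocks]

lemma psd_of_proj {m : Type*} [Fintype m] [DecidableEq m] {E : Matrix m m ℂ}
    (h1 : Eᴴ = E) (h2 : E * E = E) : E.PosSemidef := by
  have : E = Eᴴ * E := by rw [h1, h2]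
  rw [this]; exact posSemidef_conjTranspose_mul_self E

end FHB

/-- The trace norm `‖A‖_tr = tr √(A†A)`, the sum of the singular values of `A`. -/
noncomputable def traceNorm {n : Type*} [Fintype n] [DecidableEq n]
    (A : Matrix n n ℂ) : ℝ :=
  ((Matrix.posSemidef_conjTranspose_mul_self A).1.eigenvectorUnitary.1 *
    diagonal ((fun x : ℝ => (x : ℂ)) ∘ Real.sqrt ∘ (Matrix.posSemidef_conjTranspose_mul_self A).1.eigenvalues) *
    (star (Matrix.posSemidef_conjTranspose_mul_self A).1.eigenvectorUnitary : Matrix n n ℂ)).trace.re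

theorem stmt_12 {n : Type*} [Fintype n] [DecidableEq n]
    (A : Matrix n n ℂ) (t : ℝ) :
    traceNorm A ≤ t ↔
      ∃ Y Z : Matrix n n ℂ, Y.IsHermitian ∧ Z.IsHermitian ∧
        (Matrix.fromBlocks Y A Aᴴ Z).PosSemidef ∧
        Y.trace.re + Z.trace.re ≤ 2 * t := by
  obtain ⟨W, hWR, hWA, hPR, hWP⟩ := FHB.exists_W A
  have hB : (Aᴴ * A).PosSemidef := posSemidef_conjTranspose_mul_self A
  set R : Matrix n n ℂ := FHB.psqrt (posSemidef_conjTranspose_mul_self A) with hRdef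
  have hRps : R.PosSemidef := FHB.psqrt_posSemidef hB
  have hRh : Rᴴ = R := hRps.1
  have htN : traceNorm A = R.trace.re := rfl
  have hRW : R * Wᴴ = Aᴴ := by
    rw [← hWR, conjTranspose_mul, hRh]
  constructor
  · -- forward
    intro h
    refine ⟨W * R * Wᴴ, R, ?_, hRps.1, ?_, ?_⟩
    · show (W * R * Wᴴ)ᴴ = W * R * Wᴴ
      simp only [conjTranspose_mul, conjTranspose_conjTranspose, hRh, Matrix.mul_assoc]
    · -- PSD of the block
      set F : Matrix n n ℂ := FHB.psqrt hRps with hFdef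
      have hFh : Fᴴ = F := (FHB.psqrt_posSemidef hRps).1
      have hFF : F * F = R := FHB.psqrt_mul_self hRps
      have hmid : (fromBlocks R R R R : Matrix (n ⊕ n) (n ⊕ n) ℂ).PosSemidef := by
        have h2 := posSemidef_conjTranspose_mul_self
          (fromBlocks F F 0 0 : Matrix (n ⊕ n) (n ⊕ n) ℂ)
        have e : (fromBlocks F F 0 0 : Matrix (n ⊕ n) (n ⊕ n) ℂ)ᴴ * fromBlocks F F 0 0
            = fromBlocks R R R R := by
          rw [fromBlocks_conjTranspose, fromBlocks_multiply]
          simp [hFh, hFF]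
        rwa [e] at h2
      have h3 := hmid.mul_mul_conjTranspose_same
        (fromBlocks W 0 0 1 : Matrix (n ⊕ n) (n ⊕ n) ℂ)
      have e2 : (fromBlocks W 0 0 1 : Matrix (n ⊕ n) (n ⊕ n) ℂ) * fromBlocks R R R R
          * (fromBlocks W 0 0 1 : Matrix (n ⊕ n) (n ⊕ n) ℂ)ᴴ
          = fromBlocks (W * R * Wᴴ) A Aᴴ R := by
        rw [fromBlocks_conjTranspose, fromBlocks_multiply, fromBlocks_multiply]
        simp [hWR, hRW, Matrix.mul_assoc]
      rwa [e2] at h3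
    · have hYtr : (W * R * Wᴴ).trace = R.trace := by
        rw [Matrix.trace_mul_cycle, hPR]
      rw [hYtr, htN] at *
      linarith
  · -- reverse
    rintro ⟨Y, Z, hY, hZ, hM, htr⟩
    -- Y is PSD
    have hYps : Y.PosSemidef := by
      have h2 := hM.conjTranspose_mul_mul_same
        (fromRows (1 : Matrix n n ℂ) (0 : Matrix n n ℂ))
      convert h2 using 1
      symm
      rw [conjTranspose_fromRows_eq_fromCols_conjTranspose, Matrix.mul_assoc,
        fromBlocks_mul_fromRows, fromCols_mul_fromRows]
      simp
    -- the projection Q = W Wᴴ and E = 1 - Q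
    have hQh : (W * Wᴴ)ᴴ = W * Wᴴ := by
      simp [conjTranspose_mul]
    have hQQ : (W * Wᴴ) * (W * Wᴴ) = W * Wᴴ := by
      rw [Matrix.mul_assoc, ← Matrix.mul_assoc Wᴴ W Wᴴ, ← Matrix.mul_assoc W (Wᴴ * W) Wᴴ, hWP]
    have hEps : (1 - W * Wᴴ : Matrix n n ℂ).PosSemidef := by
      refine FHB.psd_of_proj ?_ ?_
      · simp [conjTranspose_sub, hQh]
      · rw [Matrix.sub_mul, Matrix.mul_sub, Matrix.mul_sub, hQQ]
        simp
    set F : Matrix n n ℂ := FHB.psqrt hEps with hFdef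
    have hFh : Fᴴ = F := (FHB.psqrt_posSemidef hEps).1
    have hFF : F * F = 1 - W * Wᴴ := FHB.psqrt_mul_self hEps
    -- tr(Wᴴ Y W) ≤ tr Y (real parts)
    have hkey : (Wᴴ * Y * W).trace.re ≤ Y.trace.re := by
      have h1 : (0 : ℂ) ≤ (F * Y * F).trace := by
        have := hYps.mul_mul_conjTranspose_same F
        rw [hFh] at this
        exact FHB.trace_nn this
      have h2 : (F * Y * F).trace = Y.trace - (W * Wᴴ * Y).trace := by
        rw [Matrix.trace_mul_cycle, hFF, Matrix.sub_mul, trace_sub, Matrix.one_mul]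
      have h3 : (Wᴴ * Y * W).trace = (W * Wᴴ * Y).trace := Matrix.trace_mul_cycle Wᴴ Y W
      have h4 := FHB.re_nn h1
      rw [h2] at h4
      rw [h3]
      simp only [Complex.sub_re] at h4
      linarith
    -- test with X = [Wᴴ, -1; 0, 0]
    have hXps := hM.mul_mul_conjTranspose_same
      (fromBlocks Wᴴ (-1) 0 0 : Matrix (n ⊕ n) (n ⊕ n) ℂ)
    have e2 : (fromBlocks Wᴴ (-1) 0 0 : Matrix (n ⊕ n) (n ⊕ n) ℂ) * fromBlocks Y A Aᴴ Z
        * (fromBlocks Wᴴ (-1) 0 0 : Matrix (n ⊕ n) (n ⊕ n) ℂ)ᴴ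
        = fromBlocks (Wᴴ * Y * W - Aᴴ * W - (Wᴴ * A - Z)) 0 0 0 := by
      rw [fromBlocks_conjTranspose, fromBlocks_multiply, fromBlocks_multiply]
      simp [Matrix.mul_assoc, Matrix.sub_mul, Matrix.mul_sub, sub_eq_add_neg, add_comm,
        add_left_comm, add_assoc]
      noncomm_ring
    rw [e2] at hXps
    have h5 : (0:ℝ) ≤ (Wᴴ * Y * W).trace.re - (Aᴴ * W).trace.re - ((Wᴴ * A).trace.re
        - Z.trace.re) := by
      have h6 := FHB.re_nn (FHB.trace_nn hXps)
      rw [FHB.trace_fb] at h6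
      simpa [Complex.sub_re, Complex.add_re] using h6
    have h7 : (Wᴴ * A).trace.re = R.trace.re := by rw [hWA]
    have h8 : (Aᴴ * W).trace.re = R.trace.re := by
      have : Aᴴ * W = (Wᴴ * A)ᴴ := by rw [conjTranspose_mul, conjTranspose_conjTranspose]
      rw [this, trace_conjTranspose, hWA]
      simp [Complex.star_def]
    rw [htN]
    linarith
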